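/- Let w_1,…,w_m be pairwise distinct complex numbers and set v(z) = Σ_{s=1}^m 2/(z−w_s)². For each j, let c_{j,n} denote the n-th Taylor coefficient at w_j of the function z ↦ Σ_{s≠j} 2/(z−w_s)² (which is analytic at w_j). Then the following are equivalent: (i) for every j = 1,…,m, Σ_{s≠j} 1/(w_s−w_j)³ = 0; (ii) for every j = 1,…,m, c_{j,1} = 0; (iii) for every j = 1,…,m, there exists a formal power series U ∈ ℂ[[T]] such that, with u = −T^{−1} + U, the formal Laurent series u² + u′ equals 2T^{−2} + Σ_{n≥0} c_{j,n} T^n (the Laurent expansion of v at w_j). -/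

import Mathlib

open Finset

/-- The formal derivative of a Laurent series: `(Σ aₙ Tⁿ)' = Σ n aₙ Tⁿ⁻¹`. -/
noncomputable def lderiv (f : LaurentSeries ℂ) : LaurentSeries ℂ :=
  HahnSeries.single (-1 : ℤ) (1 : ℂ) *
    { coeff := fun n => (n : ℂ) * f.coeff n
      isPWO_support' := f.isPWO_support'.mono (by
        intro n hn
        simp only [Function.mem_support] at hn ⊢
        exact fun h => hn (by rw [h, mul_zero])) }

/-- The `n`-th Taylor coefficient at `w j` of `z ↦ Σ_{s ≠ j} 2/(z - w s)²`
(the regular part of the potential `v(z) = Σ_s 2/(z - w s)²` at `w j`). -/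
noncomputable def taylorCoeff {m : ℕ} (w : Fin m → ℂ) (j : Fin m) (n : ℕ) : ℂ :=
  iteratedDeriv n (fun z => ∑ s ∈ univ.erase j, 2 / (z - w s) ^ 2) (w j) / (n.factorial : ℂ)

noncomputable def pre (f : LaurentSeries ℂ) : LaurentSeries ℂ :=
  { coeff := fun n => (n : ℂ) * f.coeff n
    isPWO_support' := f.isPWO_support'.mono (by
      intro n hn
      simp only [Function.mem_support] at hn ⊢
      exact fun h => hn (by rw [h, mul_zero])) }

lemma lderiv_eq (f : LaurentSeries ℂ) :
    lderiv f = HahnSeries.single (-1 : ℤ) (1 : ℂ) * pre f := rfl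

lemma lderiv_coeff (f : LaurentSeries ℂ) (n : ℤ) :
    (lderiv f).coeff n = ((n+1 : ℤ) : ℂ) * f.coeff (n+1) := by
  have h := HahnSeries.coeff_single_mul_add (r := (1:ℂ)) (x := pre f) (a := n+1) (b := -1)
  simp only [add_neg_cancel_right] at h
  rw [lderiv_eq, h, one_mul]
  rfl

lemma ofPS_coeff_neg (f : PowerSeries ℂ) (n : ℤ) (hn : n < 0) :
    (HahnSeries.ofPowerSeries ℤ ℂ f).coeff n = 0 := by
  rw [HahnSeries.ofPowerSeries_apply]
  apply HahnSeries.embDomain_notin_range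
  rintro ⟨k, hk⟩
  simp only [Nat.castOrderEmbedding_apply] at hk
  omega

open PowerSeries in
lemma lderiv_u (U : PowerSeries ℂ) :
    lderiv (-(HahnSeries.single (-1 : ℤ) (1 : ℂ)) + HahnSeries.ofPowerSeries ℤ ℂ U)
      = HahnSeries.single (-2 : ℤ) (1 : ℂ)
        + HahnSeries.ofPowerSeries ℤ ℂ (PowerSeries.derivative ℂ U) := by
  ext n
  rw [lderiv_coeff]
  rcases lt_trichotomy n (-1) with hn | hn | hn
  · rcases eq_or_ne n (-2) with h2 | h2
    · subst h2
      norm_num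
      simp [ofPS_coeff_neg _ _ (by norm_num : (-1:ℤ) < 0),
        ofPS_coeff_neg _ _ (by norm_num : (-2:ℤ) < 0)]
    · have h1 : n + 1 < 0 := by omega
      simp [HahnSeries.coeff_single, ofPS_coeff_neg _ _ h1, ofPS_coeff_neg _ _ (by omega : n < 0),
        (by omega : n + 1 ≠ -1), h2]
      intro h; exact absurd h (by omega)
  · subst hn
    simp [ofPS_coeff_neg _ _ (by norm_num : (-1:ℤ) < 0)]
  · obtain ⟨k, rfl⟩ : ∃ k : ℕ, n = (k : ℤ) := ⟨n.toNat, by omega⟩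
    have e1 : ((k:ℤ) + 1) = ((k+1 : ℕ) : ℤ) := by push_cast; ring
    rw [e1]
    simp only [HahnSeries.coeff_add, HahnSeries.coeff_neg, HahnSeries.coeff_single,
      HahnSeries.ofPowerSeries_apply_coeff]
    rw [if_neg (by omega : (((k+1:ℕ)):ℤ) ≠ -1), if_neg (by omega : ((k:ℤ)) ≠ -2)]
    rw [PowerSeries.coeff_derivative]
    push_cast
    ring

lemma single_one_ne : (HahnSeries.single (1 : ℤ) (1 : ℂ)) ≠ 0 :=
  HahnSeries.single_ne_zero one_ne_zero

open PowerSeries in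
lemma laurent_iff (U C : PowerSeries ℂ) :
    ((-(HahnSeries.single (-1 : ℤ) (1 : ℂ)) + HahnSeries.ofPowerSeries ℤ ℂ U) ^ 2 +
        lderiv (-(HahnSeries.single (-1 : ℤ) (1 : ℂ)) + HahnSeries.ofPowerSeries ℤ ℂ U)
      = HahnSeries.single (-2 : ℤ) (2 : ℂ) + HahnSeries.ofPowerSeries ℤ ℂ C)
    ↔ (PowerSeries.X * (U * U + PowerSeries.derivative ℂ U) = PowerSeries.X * C + 2 * U) := by
  set S := HahnSeries.single (-1 : ℤ) (1 : ℂ) with hS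
  set oU := HahnSeries.ofPowerSeries ℤ ℂ U with hoU
  have hSS : S * S = HahnSeries.single (-2 : ℤ) (1 : ℂ) := by
    rw [hS, HahnSeries.single_mul_single]; norm_num
  have hsq : (-S + oU) ^ 2 = S * S - 2 * (S * oU) + oU * oU := by ring
  have h22 : HahnSeries.single (-2 : ℤ) (2 : ℂ)
      = HahnSeries.single (-2 : ℤ) (1 : ℂ) + HahnSeries.single (-2 : ℤ) (1 : ℂ) := by
    have h2 := map_add (HahnSeries.single.addMonoidHom (-2 : ℤ)) (1:ℂ) 1
    norm_num at h2
    exact h2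
  rw [lderiv_u, hsq, hSS]
  have step1 : (HahnSeries.single (-2 : ℤ) (1 : ℂ) - 2 * (S * oU) + oU * oU +
      (HahnSeries.single (-2 : ℤ) (1 : ℂ) + HahnSeries.ofPowerSeries ℤ ℂ (derivative ℂ U))
      = HahnSeries.single (-2 : ℤ) (2 : ℂ) + HahnSeries.ofPowerSeries ℤ ℂ C)
      ↔ (- (2 * (S * oU)) + (oU * oU + HahnSeries.ofPowerSeries ℤ ℂ (derivative ℂ U))
        = HahnSeries.ofPowerSeries ℤ ℂ C) := by
    rw [h22]; constructor
    · intro h; apply add_left_cancel (a := HahnSeries.single (-2 : ℤ) (1 : ℂ)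
        + HahnSeries.single (-2 : ℤ) (1 : ℂ)); rw [← h]; ring
    · intro h
      rw [show HahnSeries.single (-2 : ℤ) (1 : ℂ) - 2 * (S * oU) + oU * oU +
        (HahnSeries.single (-2 : ℤ) (1 : ℂ) + HahnSeries.ofPowerSeries ℤ ℂ (derivative ℂ U))
        = HahnSeries.single (-2 : ℤ) (1 : ℂ) + HahnSeries.single (-2 : ℤ) (1 : ℂ)
          + (- (2 * (S * oU)) + (oU * oU + HahnSeries.ofPowerSeries ℤ ℂ (derivative ℂ U)))
        from by ring, h]
  rw [step1]
  -- multiply by single 1 1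
  have hX : HahnSeries.single (1 : ℤ) (1 : ℂ) = HahnSeries.ofPowerSeries ℤ ℂ PowerSeries.X :=
    (HahnSeries.ofPowerSeries_X).symm
  have hXS : HahnSeries.single (1 : ℤ) (1 : ℂ) * S = 1 := by
    rw [hS, HahnSeries.single_mul_single]; norm_num
  rw [← mul_right_inj' single_one_ne
    (b := - (2 * (S * oU)) + (oU * oU + HahnSeries.ofPowerSeries ℤ ℂ (derivative ℂ U)))
    (c := HahnSeries.ofPowerSeries ℤ ℂ C)]
  have lhs_eq : HahnSeries.single (1 : ℤ) (1 : ℂ) *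
      (- (2 * (S * oU)) + (oU * oU + HahnSeries.ofPowerSeries ℤ ℂ (derivative ℂ U)))
      = HahnSeries.ofPowerSeries ℤ ℂ (- (2 * U) + PowerSeries.X * (U * U + derivative ℂ U)) := by
    have hrhs : HahnSeries.ofPowerSeries ℤ ℂ (- (2 * U) + PowerSeries.X * (U * U + derivative ℂ U))
        = -(2 * oU) + HahnSeries.single (1 : ℤ) (1 : ℂ) *
            (oU * oU + HahnSeries.ofPowerSeries ℤ ℂ (derivative ℂ U)) := by
      rw [map_add, map_neg, map_mul, map_mul, map_add, map_mul, map_ofNat, ← hX, ← hoU]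
    rw [hrhs]
    calc HahnSeries.single (1 : ℤ) (1 : ℂ) *
        (-(2 * (S * oU)) + (oU * oU + HahnSeries.ofPowerSeries ℤ ℂ (derivative ℂ U)))
        = -((HahnSeries.single (1 : ℤ) (1 : ℂ) * S) * (2 * oU)) +
          HahnSeries.single (1 : ℤ) (1 : ℂ) *
            (oU * oU + HahnSeries.ofPowerSeries ℤ ℂ (derivative ℂ U)) := by ring
      _ = -(2 * oU) + HahnSeries.single (1 : ℤ) (1 : ℂ) *
            (oU * oU + HahnSeries.ofPowerSeries ℤ ℂ (derivative ℂ U)) := by rw [hXS, one_mul]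
  rw [lhs_eq, hX, ← map_mul]
  rw [(HahnSeries.ofPowerSeries_injective.eq_iff
    (a := - (2 * U) + PowerSeries.X * (U * U + derivative ℂ U)) (b := PowerSeries.X * C))]
  constructor
  · intro h; rw [← h]; ring
  · intro h; rw [h]; ring

noncomputable def sol (C : ℕ → ℂ) : ℕ → ℂ
  | 0 => 0
  | (n+1) => (C n - ∑ k ∈ (Finset.range (n+1)).attach, sol C k.1 * sol C (n - k.1)) / ((n : ℂ) - 1)
  decreasing_by
  · have := Finset.mem_range.mp k.2; omega
  · have := Finset.mem_range.mp k.2; omega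

lemma sol_zero (C : ℕ → ℂ) : sol C 0 = 0 := by rw [sol]

lemma sol_succ (C : ℕ → ℂ) (n : ℕ) :
    sol C (n+1) = (C n - ∑ k ∈ Finset.range (n+1), sol C k * sol C (n - k)) / ((n : ℂ) - 1) := by
  rw [sol, Finset.sum_attach (Finset.range (n+1)) (fun k => sol C k * sol C (n - k))]

open PowerSeries in
lemma exists_ps_sol (C : ℕ → ℂ) (h1 : C 1 = 0) :
    ∃ U : PowerSeries ℂ, PowerSeries.X * (U * U + PowerSeries.derivative ℂ U)
      = PowerSeries.X * (PowerSeries.mk C) + 2 * U := by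
  refine ⟨PowerSeries.mk (sol C), ?_⟩
  ext n
  have h2C : (2 : PowerSeries ℂ) = PowerSeries.C 2 := by
    rw [map_ofNat (PowerSeries.C) 2]
  cases n with
  | zero =>
    simp [PowerSeries.coeff_zero_X_mul, h2C, PowerSeries.coeff_C_mul, sol_zero]
  | succ n =>
    rw [PowerSeries.coeff_succ_X_mul, map_add, map_add, PowerSeries.coeff_succ_X_mul, h2C,
      PowerSeries.coeff_C_mul, PowerSeries.coeff_mk, PowerSeries.coeff_mul,
      Finset.Nat.sum_antidiagonal_eq_sum_range_succ_mk, PowerSeries.coeff_derivative,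
      PowerSeries.coeff_mk]
    simp only [PowerSeries.coeff_mk]
    set Sn := ∑ k ∈ Finset.range (n+1), sol C k * sol C (n - k) with hSn
    rw [sol_succ]
    rcases eq_or_ne n 1 with rfl | hn
    · have : Sn = 0 := by
        rw [hSn]
        rw [Finset.sum_range_succ, Finset.sum_range_one, sol_zero]
        simp [sol_zero]
      rw [this, h1]
      norm_num
    · have hne : (n : ℂ) - 1 ≠ 0 := by
        intro h
        apply hn
        have : (n : ℂ) = 1 := by linear_combination h
        exact_mod_cast this
      field_simp
      ring

open PowerSeries in
lemma c1_of_ps (C : ℕ → ℂ) (U : PowerSeries ℂ)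
    (h : PowerSeries.X * (U * U + PowerSeries.derivative ℂ U)
      = PowerSeries.X * (PowerSeries.mk C) + 2 * U) : C 1 = 0 := by
  have h2C : (2 : PowerSeries ℂ) = PowerSeries.C 2 := by
    rw [map_ofNat (PowerSeries.C) 2]
  have h0 : PowerSeries.coeff 0 U = 0 := by
    have := congrArg (PowerSeries.coeff 0) h
    rw [PowerSeries.coeff_zero_X_mul, map_add, PowerSeries.coeff_zero_X_mul, h2C,
      PowerSeries.coeff_C_mul] at this
    linear_combination -this / 2
  have h2 := congrArg (PowerSeries.coeff 2) h
  rw [PowerSeries.coeff_succ_X_mul, map_add, map_add, PowerSeries.coeff_succ_X_mul, h2C,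
    PowerSeries.coeff_C_mul, PowerSeries.coeff_mk, PowerSeries.coeff_mul,
    Finset.Nat.sum_antidiagonal_eq_sum_range_succ_mk, PowerSeries.coeff_derivative] at h2
  rw [Finset.sum_range_succ, Finset.sum_range_one] at h2
  simp only [h0] at h2
  norm_num at h2
  linear_combination -h2

lemma taylor_one {m : ℕ} (w : Fin m → ℂ) (hwinj : Function.Injective w) (j : Fin m) :
    taylorCoeff w j 1 = 4 * ∑ s ∈ univ.erase j, 1 / (w s - w j) ^ 3 := by
  have key : ∀ s ∈ univ.erase j, HasDerivAt (fun z => 2 / (z - w s)^2)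
      (4 / (w s - w j)^3) (w j) := by
    intro s hs
    have hws : w s ≠ w j := fun h => (Finset.mem_erase.mp hs).1 (hwinj h)
    have hsub : w j - w s ≠ 0 := sub_ne_zero.mpr (Ne.symm hws)
    have hsub' : w s - w j ≠ 0 := sub_ne_zero.mpr hws
    have hden : (w j - w s)^2 ≠ 0 := pow_ne_zero 2 hsub
    have h1 : HasDerivAt (fun z : ℂ => (z - w s)^2) (2*(w j - w s)^1*1) (w j) :=
      ((hasDerivAt_id (w j)).sub_const (w s)).pow 2
    have h2 := (hasDerivAt_const (w j) (2:ℂ)).div h1 hden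
    refine h2.congr_deriv ?_
    rw [div_eq_div_iff (pow_ne_zero 2 hden) (pow_ne_zero 3 hsub')]
    ring
  have hderiv : deriv (fun z => ∑ s ∈ univ.erase j, 2 / (z - w s) ^ 2) (w j)
      = ∑ s ∈ univ.erase j, 4 / (w s - w j)^3 :=
    (HasDerivAt.fun_sum key).deriv
  rw [taylorCoeff, iteratedDeriv_one, hderiv]
  rw [Finset.mul_sum]
  simp only [Nat.factorial_one, Nat.cast_one, div_one]
  exact Finset.sum_congr rfl fun s _ => (mul_one_div 4 _).symm

theorem rational_kdv_no_monodromy_tfae (m : ℕ) (w : Fin m → ℂ)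
    (hwinj : Function.Injective w) :
    ((∀ j : Fin m, ∑ s ∈ univ.erase j, 1 / (w s - w j) ^ 3 = 0) ↔
      (∀ j : Fin m, taylorCoeff w j 1 = 0)) ∧
    ((∀ j : Fin m, taylorCoeff w j 1 = 0) ↔
      (∀ j : Fin m, ∃ U : PowerSeries ℂ,
        (-(HahnSeries.single (-1 : ℤ) (1 : ℂ)) + HahnSeries.ofPowerSeries ℤ ℂ U) ^ 2 +
            lderiv (-(HahnSeries.single (-1 : ℤ) (1 : ℂ)) + HahnSeries.ofPowerSeries ℤ ℂ U)
          = HahnSeries.single (-2 : ℤ) (2 : ℂ)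
            + HahnSeries.ofPowerSeries ℤ ℂ (PowerSeries.mk fun n => taylorCoeff w j n))) := by
  constructor
  · apply forall_congr'
    intro j
    rw [taylor_one w hwinj j]
    constructor
    · intro h; rw [h, mul_zero]
    · intro h
      have h4 : (4:ℂ) ≠ 0 := by norm_num
      exact (mul_eq_zero.mp h).resolve_left h4
  · constructor
    · intro h j
      obtain ⟨U, hU⟩ := exists_ps_sol (taylorCoeff w j) (h j)
      exact ⟨U, (laurent_iff U (PowerSeries.mk fun n => taylorCoeff w j n)).mpr hU⟩
    · intro h j
      obtain ⟨U, hU⟩ := h j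
      exact c1_of_ps (taylorCoeff w j) U
        ((laurent_iff U (PowerSeries.mk fun n => taylorCoeff w j n)).mp hU)
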